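/- Let k, ℓ ∈ {1,…,d} with k ≠ ℓ, and let λ_k ∈ (0,∞). If s = s(b) ∈ Int(S_d) is a sequence such that s_k/b → λ_k as b → 0 while s_ℓ is fixed, then b^{−2} C_b(s(b);k,ℓ) → 1 − s_ℓ (λ_k + d + 2) as b → 0, where C_b(s;k,ℓ) = ∫_{S_d} (x_k − s_k)(x_ℓ − s_ℓ) κ_{s,b}(x) dx; in particular, if s_k = λ_k b exactly and s_ℓ is fixed, then C_b(s;k,ℓ) = b² {1 − s_ℓ(λ_k + d + 2)} + O(b³). -/

import Mathlib

open MeasureTheory ProbabilityTheory Real Filter Finset Matrix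

noncomputable section

/-- The unit simplex `S_d = {x ∈ [0,1]^d : x_1 + … + x_d ≤ 1}`. -/
def Sd (d : ℕ) : Set (Fin d → ℝ) :=
  {x | (∀ i, 0 ≤ x i ∧ x i ≤ 1) ∧ ∑ i, x i ≤ 1}

/-- The interior of the unit simplex. -/
def SdInt (d : ℕ) : Set (Fin d → ℝ) :=
  {x | (∀ i, 0 < x i) ∧ ∑ i, x i < 1}

/-- The Dirichlet(u, v) density on the simplex. -/
def Kdir {d : ℕ} (u : Fin d → ℝ) (v : ℝ) (x : Fin d → ℝ) : ℝ :=
  (Gamma ((∑ i, u i) + v) / (Gamma v * ∏ i, Gamma (u i))) *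
    (1 - ∑ i, x i) ^ (v - 1) * ∏ i, (x i) ^ (u i - 1)

/-- The locally adaptive Dirichlet kernel `κ_{s,b}`. -/
def kappa {d : ℕ} (s : Fin d → ℝ) (b : ℝ) : (Fin d → ℝ) → ℝ :=
  Kdir (fun i => s i / b + 1) ((1 - ∑ i, s i) / b + 1)

/-- `A_b(s) = ∫_{S_d} κ_{s,b}(x)² dx`. -/
def Adir {d : ℕ} (b : ℝ) (s : Fin d → ℝ) : ℝ :=
  ∫ x in Sd d, (kappa s b x) ^ 2

/-- Second partial derivative `∂² m / ∂ s_k ∂ s_ℓ` at `s`. -/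
def d2 {d : ℕ} (m : (Fin d → ℝ) → ℝ) (k l : Fin d) (s : Fin d → ℝ) : ℝ :=
  fderiv ℝ (fun x => fderiv ℝ m x (Pi.single l 1)) s (Pi.single k 1)

/-- The function `h_J(s)` from the paper. -/
def hJfun {d : ℕ} (m : (Fin d → ℝ) → ℝ) (J : Finset (Fin d)) (lam : Fin d → ℝ)
    (s : Fin d → ℝ) : ℝ :=
  if J = Finset.univ then
    ∑ k, ∑ l, (1 / 2 : ℝ) * ((lam k + 1) * (if k = l then 1 else 0) + 1) * d2 m k l s
  else
    ∑ k ∈ Jᶜ, ∑ l ∈ Jᶜ, (1 / 2 : ℝ) * ((if k = l then s k else 0) - s k * s l) * d2 m k l s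

/-- The function `ψ_J(s)` from the paper. -/
def psiJ {d : ℕ} (J : Finset (Fin d)) (s : Fin d → ℝ) : ℝ :=
  ((4 * π) ^ ((d : ℝ) - J.card) * (1 - ∑ i, s i) * ∏ i ∈ Jᶜ, s i) ^ (-(1 : ℝ) / 2)

/-- The product `∏_{i ∈ J} Γ(2λ_i+1) / (2^{2λ_i+1} Γ(λ_i+1)²)`. -/
def gamProd {d : ℕ} (J : Finset (Fin d)) (lam : Fin d → ℝ) : ℝ :=
  ∏ i ∈ J, Gamma (2 * lam i + 1) / ((2 : ℝ) ^ (2 * lam i + 1) * Gamma (lam i + 1) ^ 2)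

/-- The local linear smoother with Dirichlet kernel. -/
def mLL {d n : ℕ} (b : ℝ) (X : Fin n → Fin d → ℝ) (Y : Fin n → ℝ) (s : Fin d → ℝ) : ℝ :=
  let 𝒳 : Matrix (Fin n) (Fin (d + 1)) ℝ :=
    Matrix.of fun i => Fin.cases 1 (fun k => X i k - s k)
  let W : Matrix (Fin n) (Fin n) ℝ := Matrix.diagonal fun i => kappa s b (X i)
  ((𝒳ᵀ * W * 𝒳)⁻¹ *ᵥ (𝒳ᵀ *ᵥ (W *ᵥ Y))) 0

/-- The Nadaraya–Watson estimator with Dirichlet kernel. -/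
def mNW {d n : ℕ} (b : ℝ) (X : Fin n → Fin d → ℝ) (Y : Fin n → ℝ) (s : Fin d → ℝ) : ℝ :=
  (∑ i, Y i * kappa s b (X i)) / ∑ j, kappa s b (X j)

/-- Central second moment `C_b(s; k, ℓ)` of the Dirichlet kernel. -/
def CbM {d : ℕ} (b : ℝ) (s : Fin d → ℝ) (k l : Fin d) : ℝ :=
  ∫ x in Sd d, (x k - s k) * (x l - s l) * kappa s b x

end
lemma isClosed_Sd (d : ℕ) : IsClosed (Sd d) := by
  have h1 : IsClosed {x : Fin d → ℝ | ∀ i, 0 ≤ x i ∧ x i ≤ 1} := by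
    have : {x : Fin d → ℝ | ∀ i, 0 ≤ x i ∧ x i ≤ 1}
        = ⋂ i, ({x : Fin d → ℝ | 0 ≤ x i} ∩ {x | x i ≤ 1}) := by
      ext x; simp [Set.mem_iInter, forall_and]
    rw [this]
    exact isClosed_iInter fun i =>
      ((isClosed_le continuous_const (continuous_apply i)).inter
        (isClosed_le (continuous_apply i) continuous_const))
  have h2 : IsClosed {x : Fin d → ℝ | ∑ i, x i ≤ 1} :=
    isClosed_le (by fun_prop) continuous_const
  exact h1.inter h2

lemma isCompact_Sd (d : ℕ) : IsCompact (Sd d) := by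
  refine IsCompact.of_isClosed_subset (isCompact_Icc (a := (0 : Fin d → ℝ)) (b := 1))
    (isClosed_Sd d) ?_
  intro x hx
  exact ⟨fun i => (hx.1 i).1, fun i => (hx.1 i).2⟩

lemma measurableSet_Sd (d : ℕ) : MeasurableSet (Sd d) := (isClosed_Sd d).measurableSet

lemma cont_rpow {p : ℝ} (hp : 0 ≤ p) : Continuous fun y : ℝ => y ^ p := by
  rcases hp.eq_or_lt with h | h
  · simp only [← h, Real.rpow_zero]; exact continuous_const
  · exact continuous_iff_continuousAt.2 fun y => Real.continuousAt_rpow_const y p (Or.inr h.le)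

lemma cont_dirichlet {d : ℕ} {a : Fin d → ℝ} {v : ℝ} (ha : ∀ i, 1 ≤ a i) (hv : 1 ≤ v) :
    Continuous fun x : Fin d → ℝ => (1 - ∑ i, x i) ^ (v - 1) * ∏ i, (x i) ^ (a i - 1) := by
  refine Continuous.mul ?_ ?_
  · exact (cont_rpow (by linarith)).comp (continuous_const.sub (by fun_prop))
  · exact continuous_finset_prod _ fun i _ =>
      (cont_rpow (by linarith [ha i])).comp (continuous_apply i)

lemma integrableOn_dirichlet {d : ℕ} {a : Fin d → ℝ} {v : ℝ} (ha : ∀ i, 1 ≤ a i) (hv : 1 ≤ v) :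
    IntegrableOn (fun x : Fin d → ℝ => (1 - ∑ i, x i) ^ (v - 1) * ∏ i, (x i) ^ (a i - 1))
      (Sd d) := by
  exact (cont_dirichlet ha hv).continuousOn.integrableOn_compact (isCompact_Sd d)

lemma realBeta (p q : ℝ) (hp : 0 < p) (hq : 0 < q) {c : ℝ} (hc : 0 < c) :
    ∫ t in (0:ℝ)..c, t ^ (p - 1) * (c - t) ^ (q - 1)
      = c ^ (p + q - 1) * (Gamma p * Gamma q / Gamma (p + q)) := by
  have key : ∫ t in (0:ℝ)..c, (t:ℂ) ^ ((p:ℂ) - 1) * ((c:ℂ) - t) ^ ((q:ℂ) - 1)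
      = (c:ℂ) ^ ((p:ℂ) + q - 1) * Complex.betaIntegral p q :=
    Complex.betaIntegral_scaled p q hc
  have hbeta : Complex.betaIntegral p q
      = ((Gamma p * Gamma q / Gamma (p + q) : ℝ) : ℂ) := by
    have h := Complex.Gamma_mul_Gamma_eq_betaIntegral
      (s := (p:ℂ)) (t := (q:ℂ)) (by simpa using hp) (by simpa using hq)
    have hne : Complex.Gamma ((p:ℂ) + q) ≠ 0 := by
      rw [show ((p:ℂ) + q) = ((p + q : ℝ) : ℂ) by push_cast; ring, Complex.Gamma_ofReal]
      exact_mod_cast (Real.Gamma_pos_of_pos (by linarith)).ne'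
    rw [Complex.ofReal_div, Complex.ofReal_mul, ← Complex.Gamma_ofReal p,
      ← Complex.Gamma_ofReal q, ← Complex.Gamma_ofReal (p + q), Complex.ofReal_add,
      eq_div_iff hne]
    linear_combination -h
  have hL : ∫ t in (0:ℝ)..c, (t:ℂ) ^ ((p:ℂ) - 1) * ((c:ℂ) - t) ^ ((q:ℂ) - 1)
      = ((∫ t in (0:ℝ)..c, t ^ (p - 1) * (c - t) ^ (q - 1) : ℝ) : ℂ) := by
    rw [← intervalIntegral.integral_ofReal]
    refine intervalIntegral.integral_congr (fun t ht => ?_)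
    rw [Set.uIcc_of_le hc.le] at ht
    rw [Complex.ofReal_mul, Complex.ofReal_cpow ht.1, Complex.ofReal_cpow
      (by linarith [ht.2] : (0:ℝ) ≤ c - t)]
    push_cast
    ring
  have hR : ((c:ℂ)) ^ ((p:ℂ) + q - 1) = ((c ^ (p + q - 1) : ℝ) : ℂ) := by
    rw [Complex.ofReal_cpow hc.le]
    push_cast
    ring
  rw [hL, hR, hbeta] at key
  exact_mod_cast key

lemma cons_mem_Sd {d : ℕ} (t : ℝ) (y : Fin d → ℝ) :
    Fin.cons t y ∈ Sd (d + 1) ↔ y ∈ Sd d ∧ t ∈ Set.Icc 0 (1 - ∑ i, y i) := by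
  constructor
  · rintro ⟨hbox, hsum⟩
    rw [Fin.sum_cons] at hsum
    have ht0 : 0 ≤ t := (hbox 0).1
    refine ⟨⟨fun j => by simpa using hbox j.succ, by linarith⟩, ht0, by linarith⟩
  · rintro ⟨⟨hbox, hsum⟩, ht0, ht1⟩
    have hy0 : 0 ≤ ∑ i, y i := Finset.sum_nonneg fun i _ => (hbox i).1
    refine ⟨fun i => ?_, by rw [Fin.sum_cons]; linarith⟩
    refine Fin.cases ?_ (fun j => ?_) i
    · exact ⟨ht0, by simpa using by linarith⟩
    · simpa using hbox j

lemma betaIcc (p q : ℝ) (hp : 1 ≤ p) (hq : 1 ≤ q) {c : ℝ} (hc : 0 ≤ c) :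
    ∫ t in Set.Icc (0:ℝ) c, t ^ (p - 1) * (c - t) ^ (q - 1)
      = c ^ (p + q - 1) * (Gamma p * Gamma q / Gamma (p + q)) := by
  rcases hc.eq_or_lt with h | h
  · rw [← h]
    rw [Set.Icc_self, Real.zero_rpow (by linarith : p + q - 1 ≠ 0)]
    rw [MeasureTheory.setIntegral_measure_zero _ (by simp : (volume : Measure ℝ) {(0:ℝ)} = 0)]
    ring
  · rw [MeasureTheory.integral_Icc_eq_integral_Ioc,
      ← intervalIntegral.integral_of_le hc]
    exact realBeta p q (by linarith) (by linarith) h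

theorem dirichlet_int {d : ℕ} : ∀ (a : Fin d → ℝ) (v : ℝ), (∀ i, 1 ≤ a i) → 1 ≤ v →
    ∫ x in Sd d, (1 - ∑ i, x i) ^ (v - 1) * ∏ i, (x i) ^ (a i - 1)
      = (∏ i, Gamma (a i)) * Gamma v / Gamma ((∑ i, a i) + v) := by
  induction d with
  | zero =>
      intro a v ha hv
      have hSd : Sd 0 = Set.univ := by
        ext x; simp [Sd]
      rw [hSd, Measure.restrict_univ]
      simp only [Finset.univ_eq_empty, Finset.sum_empty, Finset.prod_empty, sub_zero,
        Real.one_rpow, mul_one, one_mul, zero_add]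
      rw [integral_const]
      rw [volume_pi, measureReal_def, Measure.pi_empty_univ]
      rw [div_self (Real.Gamma_pos_of_pos (by linarith : (0:ℝ) < v)).ne']
      simp
  | succ d ih =>
      intro a v ha hv
      set F : (Fin (d+1) → ℝ) → ℝ :=
        fun x => (1 - ∑ i, x i) ^ (v - 1) * ∏ i, (x i) ^ (a i - 1) with hF
      have hint : Integrable (Set.indicator (Sd (d+1)) F) := by
        rw [MeasureTheory.integrable_indicator_iff (measurableSet_Sd _)]
        exact integrableOn_dirichlet ha hv
      rw [← MeasureTheory.integral_indicator (measurableSet_Sd _)]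
      rw [volume_pi, ← ((measurePreserving_piFinSuccAbove
        (fun _ : Fin (d+1) => (volume : Measure ℝ)) 0).symm).integral_comp']
      have hsymm : ∀ z : ℝ × (Fin d → ℝ),
          (MeasurableEquiv.piFinSuccAbove (fun _ : Fin (d+1) => ℝ) 0).symm z
            = Fin.cons z.1 z.2 := by
        intro z
        simp [MeasurableEquiv.piFinSuccAbove_symm_apply, Fin.insertNthEquiv,
          Fin.insertNth_zero]
      simp_rw [hsymm]
      have hint2 : Integrable
          (fun z : ℝ × (Fin d → ℝ) => Set.indicator (Sd (d+1)) F (Fin.cons z.1 z.2))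
          ((volume : Measure ℝ).prod (Measure.pi fun _ => (volume : Measure ℝ))) := by
        have h := (((measurePreserving_piFinSuccAbove
          (fun _ : Fin (d+1) => (volume : Measure ℝ)) 0).symm).integrable_comp_emb
          (MeasurableEquiv.measurableEmbedding _)).2 (by rw [← volume_pi]; exact hint)
        refine h.congr (Filter.Eventually.of_forall fun z => ?_)
        rw [Function.comp_apply, hsymm]
      rw [MeasureTheory.integral_prod_symm _ hint2]
      have hc0 : ∀ y : Fin d → ℝ, y ∈ Sd d → 0 ≤ 1 - ∑ i, y i := by
        intro y hy; linarith [hy.2]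
      have hinner : ∀ y : Fin d → ℝ,
          (∫ t, Set.indicator (Sd (d+1)) F (Fin.cons t y))
            = Set.indicator (Sd d) (fun y =>
                (Gamma (a 0) * Gamma v / Gamma (a 0 + v)) *
                ((1 - ∑ j, y j) ^ ((a 0 + v) - 1) * ∏ j, (y j) ^ (a j.succ - 1))) y := by
        intro y
        by_cases hy : y ∈ Sd d
        · have hset : ∀ t : ℝ, Set.indicator (Sd (d+1)) F (Fin.cons t y)
              = Set.indicator (Set.Icc 0 (1 - ∑ i, y i)) (fun t => F (Fin.cons t y)) t := by
            intro t
            by_cases ht : t ∈ Set.Icc (0:ℝ) (1 - ∑ i, y i)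
            · rw [Set.indicator_of_mem ((cons_mem_Sd t y).2 ⟨hy, ht⟩), Set.indicator_of_mem ht]
            · rw [Set.indicator_of_notMem (fun hmem => ht ((cons_mem_Sd t y).1 hmem).2),
                Set.indicator_of_notMem ht]
          simp_rw [hset]
          rw [MeasureTheory.integral_indicator measurableSet_Icc]
          have hFc : ∀ t : ℝ, F (Fin.cons t y)
              = (t ^ (a 0 - 1) * ((1 - ∑ i, y i) - t) ^ (v - 1)) *
                  ∏ j, (y j) ^ (a j.succ - 1) := by
            intro t
            have hbase : 1 - ∑ i, Fin.cons t y i = (1 - ∑ i, y i) - t := by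
              rw [Fin.sum_cons]; ring
            rw [hF]
            simp only [hbase, Fin.prod_univ_succ, Fin.cons_zero, Fin.cons_succ]
            ring
          simp_rw [hFc]
          rw [MeasureTheory.integral_mul_const,
            betaIcc (a 0) v (ha 0) hv (hc0 y hy),
            Set.indicator_of_mem hy]
          ring
        · have hzero : ∀ t : ℝ, Set.indicator (Sd (d+1)) F (Fin.cons t y) = 0 := fun t =>
            Set.indicator_of_notMem (fun hmem => hy ((cons_mem_Sd t y).1 hmem).1) _
          simp_rw [hzero]
          rw [Set.indicator_of_notMem hy, integral_zero]
      simp_rw [hinner]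
      rw [← volume_pi, MeasureTheory.integral_indicator (measurableSet_Sd d),
        MeasureTheory.integral_const_mul,
        ih (fun j : Fin d => a j.succ) (a 0 + v) (fun j : Fin d => ha j.succ) (by linarith [ha 0])]
      have h1 : (0:ℝ) < Gamma (a 0 + v) :=
        Real.Gamma_pos_of_pos (by linarith [ha 0])
      have h2 : (0:ℝ) < Gamma ((∑ j : Fin d, a j.succ) + (a 0 + v)) := by
        refine Real.Gamma_pos_of_pos ?_
        have : 0 ≤ ∑ j : Fin d, a j.succ :=
          Finset.sum_nonneg fun j _ => by linarith [ha j.succ]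
        linarith [ha 0]
      rw [Fin.prod_univ_succ, Fin.sum_univ_succ]
      have hsum : a 0 + ∑ j : Fin d, a j.succ + v = (∑ j : Fin d, a j.succ) + (a 0 + v) := by ring
      rw [hsum]
      field_simp

lemma mul_rpow_sub_one {x e : ℝ} (hx : 0 ≤ x) (he : 0 < e) : x * x ^ (e - 1) = x ^ e := by
  rcases hx.eq_or_lt with h | h
  · rw [← h, Real.zero_rpow he.ne', zero_mul]
  · nth_rewrite 1 [← Real.rpow_one x]
    rw [← Real.rpow_add h]
    ring_nf

lemma prod_update_pow {d : ℕ} (a : Fin d → ℝ) (ha : ∀ i, 1 < a i) (k : Fin d)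
    (x : Fin d → ℝ) (hx : ∀ i, 0 ≤ x i) :
    x k * ∏ i, (x i) ^ (a i - 1) = ∏ i, (x i) ^ (Function.update a k (a k + 1) i - 1) := by
  rw [← Finset.mul_prod_erase Finset.univ (fun i => (x i) ^ (a i - 1)) (Finset.mem_univ k),
    ← Finset.mul_prod_erase Finset.univ _ (Finset.mem_univ k), Function.update_self,
    ← mul_assoc, mul_rpow_sub_one (hx k) (lt_trans one_pos (ha k)), add_sub_cancel_right]
  congr 1
  exact Finset.prod_congr rfl fun i hi => by
    rw [Function.update_of_ne (Finset.ne_of_mem_erase hi)]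

lemma dirichlet_shift {d : ℕ} (a : Fin d → ℝ) (v : ℝ) (ha : ∀ i, 1 < a i) (k : Fin d) :
    ∫ x in Sd d, x k * ((1 - ∑ i, x i) ^ (v - 1) * ∏ i, (x i) ^ (a i - 1))
      = ∫ x in Sd d,
          (1 - ∑ i, x i) ^ (v - 1) * ∏ i, (x i) ^ (Function.update a k (a k + 1) i - 1) := by
  refine MeasureTheory.setIntegral_congr_fun (measurableSet_Sd d) fun x hx => ?_
  have h := prod_update_pow a ha k x (fun i => (hx.1 i).1)
  calc x k * ((1 - ∑ i, x i) ^ (v - 1) * ∏ i, (x i) ^ (a i - 1))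
      = (1 - ∑ i, x i) ^ (v - 1) * (x k * ∏ i, (x i) ^ (a i - 1)) := by ring
    _ = _ := by rw [h]

lemma update_gt_one {d : ℕ} {a : Fin d → ℝ} (ha : ∀ i, 1 < a i) (k : Fin d) :
    ∀ i, 1 < Function.update a k (a k + 1) i := by
  intro i
  rw [Function.update_apply]
  split
  · linarith [ha k]
  · exact ha i

lemma prod_gamma_update {d : ℕ} (a : Fin d → ℝ) (ha : ∀ i, 1 < a i) (k : Fin d) :
    ∏ i, Gamma (Function.update a k (a k + 1) i) = a k * ∏ i, Gamma (a i) := by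
  rw [← Finset.mul_prod_erase Finset.univ (fun i => Gamma (a i)) (Finset.mem_univ k),
    ← Finset.mul_prod_erase Finset.univ (fun i => Gamma (Function.update a k (a k + 1) i))
      (Finset.mem_univ k), Function.update_self,
    Real.Gamma_add_one (ne_of_gt (lt_trans one_pos (ha k))), mul_assoc]
  congr 1
  congr 1
  exact Finset.prod_congr rfl fun i hi => by
    rw [Function.update_of_ne (Finset.ne_of_mem_erase hi)]

lemma sum_update_add_one {d : ℕ} (a : Fin d → ℝ) (k : Fin d) :
    ∑ i, Function.update a k (a k + 1) i = (∑ i, a i) + 1 := by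
  rw [Finset.sum_update_of_mem (Finset.mem_univ k),
    ← Finset.add_sum_erase Finset.univ a (Finset.mem_univ k), Finset.sdiff_singleton_eq_erase]
  ring

lemma dirichlet_int1 {d : ℕ} (a : Fin d → ℝ) (v : ℝ) (ha : ∀ i, 1 < a i) (hv : 1 ≤ v)
    (k : Fin d) :
    ∫ x in Sd d, x k * ((1 - ∑ i, x i) ^ (v - 1) * ∏ i, (x i) ^ (a i - 1))
      = a k * ((∏ i, Gamma (a i)) * Gamma v /
          ((((∑ i, a i) + v)) * Gamma ((∑ i, a i) + v))) := by
  have hα : (0 : ℝ) < (∑ i, a i) + v := by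
    have : (0:ℝ) ≤ ∑ i, a i := Finset.sum_nonneg fun i _ => by linarith [ha i]
    linarith
  rw [dirichlet_shift a v ha k,
    dirichlet_int _ v (fun i => le_of_lt (update_gt_one ha k i)) hv,
    prod_gamma_update a ha k, sum_update_add_one a k,
    show (∑ i, a i) + 1 + v = ((∑ i, a i) + v) + 1 by ring,
    Real.Gamma_add_one hα.ne']
  ring

lemma dirichlet_int2 {d : ℕ} (a : Fin d → ℝ) (v : ℝ) (ha : ∀ i, 1 < a i) (hv : 1 ≤ v)
    (k l : Fin d) (hkl : k ≠ l) :
    ∫ x in Sd d, x k * x l * ((1 - ∑ i, x i) ^ (v - 1) * ∏ i, (x i) ^ (a i - 1))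
      = a k * a l * ((∏ i, Gamma (a i)) * Gamma v /
          ((((∑ i, a i) + v) + 1) * (((∑ i, a i) + v)) * Gamma ((∑ i, a i) + v))) := by
  have hα : (0 : ℝ) < (∑ i, a i) + v := by
    have : (0:ℝ) ≤ ∑ i, a i := Finset.sum_nonneg fun i _ => by linarith [ha i]
    linarith
  set a' : Fin d → ℝ := Function.update a k (a k + 1) with ha'def
  have ha' : ∀ i, 1 < a' i := update_gt_one ha k
  have hstep : ∫ x in Sd d, x k * x l * ((1 - ∑ i, x i) ^ (v - 1) * ∏ i, (x i) ^ (a i - 1))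
      = ∫ x in Sd d, x l * ((1 - ∑ i, x i) ^ (v - 1) * ∏ i, (x i) ^ (a' i - 1)) := by
    refine MeasureTheory.setIntegral_congr_fun (measurableSet_Sd d) fun x hx => ?_
    have h := prod_update_pow a ha k x (fun i => (hx.1 i).1)
    calc x k * x l * ((1 - ∑ i, x i) ^ (v - 1) * ∏ i, (x i) ^ (a i - 1))
        = x l * ((1 - ∑ i, x i) ^ (v - 1) * (x k * ∏ i, (x i) ^ (a i - 1))) := by ring
      _ = _ := by rw [h]
  rw [hstep, dirichlet_int1 a' v ha' hv l, prod_gamma_update a ha k, sum_update_add_one a k,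
    show (∑ i, a i) + 1 + v = ((∑ i, a i) + v) + 1 by ring,
    Real.Gamma_add_one hα.ne']
  have hal : a' l = a l := Function.update_of_ne (Ne.symm hkl) _ _
  rw [hal]
  ring

section Moments

variable {d : ℕ} {b : ℝ} {s : Fin d → ℝ}

lemma kappa_eq (s : Fin d → ℝ) (b : ℝ) (x : Fin d → ℝ) :
    kappa s b x = (Gamma ((∑ i, (s i / b + 1)) + ((1 - ∑ i, s i) / b + 1)) /
        (Gamma ((1 - ∑ i, s i) / b + 1) * ∏ i, Gamma (s i / b + 1))) *
      ((1 - ∑ i, x i) ^ (((1 - ∑ i, s i) / b + 1) - 1) *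
        ∏ i, (x i) ^ ((s i / b + 1) - 1)) := by
  unfold kappa Kdir
  ring

lemma hu_gt (hb : 0 < b) (hs : s ∈ SdInt d) : ∀ i, 1 < s i / b + 1 := by
  intro i
  have := hs.1 i
  have : 0 < s i / b := div_pos this hb
  linarith

lemma hv_gt (hb : 0 < b) (hs : s ∈ SdInt d) : 1 < (1 - ∑ i, s i) / b + 1 := by
  have h1 : 0 < 1 - ∑ i, s i := by linarith [hs.2]
  have : 0 < (1 - ∑ i, s i) / b := div_pos h1 hb
  linarith

lemma sum_uv (hb : 0 < b) :
    (∑ i, (s i / b + 1)) + ((1 - ∑ i, s i) / b + 1) = 1 / b + d + 1 := by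
  rw [Finset.sum_add_distrib, ← Finset.sum_div, Finset.sum_const, Finset.card_univ,
    Fintype.card_fin]
  field_simp
  ring

end Moments

section Moments2

variable {d : ℕ} {b : ℝ} {s : Fin d → ℝ}

lemma kappa_M0 (hb : 0 < b) (hs : s ∈ SdInt d) : ∫ x in Sd d, kappa s b x = 1 := by
  have hu := hu_gt hb hs
  have hv := hv_gt hb hs
  set u : Fin d → ℝ := fun i => s i / b + 1 with hu_def
  set v : ℝ := (1 - ∑ i, s i) / b + 1 with hv_def
  have hu2 : ∀ i, 1 < u i := fun i => hu i
  have hv2 : 1 < v := hv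
  have hA : (0:ℝ) < (∑ i, u i) + v := by
    rw [sum_uv hb]
    positivity
  have hΓv : (0:ℝ) < Gamma v := Real.Gamma_pos_of_pos (by linarith)
  have hΓA : (0:ℝ) < Gamma ((∑ i, u i) + v) := Real.Gamma_pos_of_pos hA
  have hΓu : (0:ℝ) < ∏ i, Gamma (u i) :=
    Finset.prod_pos fun i _ => Real.Gamma_pos_of_pos (by linarith [hu2 i])
  calc ∫ x in Sd d, kappa s b x
      = ∫ x in Sd d, (Gamma ((∑ i, u i) + v) / (Gamma v * ∏ i, Gamma (u i))) *
          ((1 - ∑ i, x i) ^ (v - 1) * ∏ i, (x i) ^ (u i - 1)) :=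
        MeasureTheory.setIntegral_congr_fun (measurableSet_Sd d)
          fun x _ => kappa_eq s b x
    _ = (Gamma ((∑ i, u i) + v) / (Gamma v * ∏ i, Gamma (u i))) *
          ∫ x in Sd d, (1 - ∑ i, x i) ^ (v - 1) * ∏ i, (x i) ^ (u i - 1) :=
        MeasureTheory.integral_const_mul _ _
    _ = 1 := by
        rw [dirichlet_int u v (fun i => (hu2 i).le) hv2.le]
        field_simp

lemma kappa_M1 (hb : 0 < b) (hs : s ∈ SdInt d) (k : Fin d) :
    ∫ x in Sd d, x k * kappa s b x = (s k / b + 1) / (1 / b + d + 1) := by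
  have hu := hu_gt hb hs
  have hv := hv_gt hb hs
  set u : Fin d → ℝ := fun i => s i / b + 1 with hu_def
  set v : ℝ := (1 - ∑ i, s i) / b + 1 with hv_def
  have hu2 : ∀ i, 1 < u i := fun i => hu i
  have hv2 : 1 < v := hv
  have hsum : (∑ i, u i) + v = 1 / b + d + 1 := sum_uv hb
  have hA : (0:ℝ) < (∑ i, u i) + v := by rw [hsum]; positivity
  have hΓv : (0:ℝ) < Gamma v := Real.Gamma_pos_of_pos (by linarith)
  have hΓA : (0:ℝ) < Gamma ((∑ i, u i) + v) := Real.Gamma_pos_of_pos hA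
  have hΓu : (0:ℝ) < ∏ i, Gamma (u i) :=
    Finset.prod_pos fun i _ => Real.Gamma_pos_of_pos (by linarith [hu2 i])
  calc ∫ x in Sd d, x k * kappa s b x
      = ∫ x in Sd d, (Gamma ((∑ i, u i) + v) / (Gamma v * ∏ i, Gamma (u i))) *
          (x k * ((1 - ∑ i, x i) ^ (v - 1) * ∏ i, (x i) ^ (u i - 1))) :=
        MeasureTheory.setIntegral_congr_fun (measurableSet_Sd d)
          fun x _ => by rw [kappa_eq s b x]; ring
    _ = (Gamma ((∑ i, u i) + v) / (Gamma v * ∏ i, Gamma (u i))) *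
          ∫ x in Sd d, x k * ((1 - ∑ i, x i) ^ (v - 1) * ∏ i, (x i) ^ (u i - 1)) :=
        MeasureTheory.integral_const_mul _ _
    _ = u k / ((∑ i, u i) + v) := by
        rw [dirichlet_int1 u v hu hv.le k]
        field_simp
    _ = (s k / b + 1) / (1 / b + d + 1) := by rw [hsum]

lemma kappa_M2 (hb : 0 < b) (hs : s ∈ SdInt d) (k l : Fin d) (hkl : k ≠ l) :
    ∫ x in Sd d, x k * x l * kappa s b x
      = (s k / b + 1) * (s l / b + 1) / ((1 / b + d + 1) * (1 / b + d + 2)) := by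
  have hu := hu_gt hb hs
  have hv := hv_gt hb hs
  set u : Fin d → ℝ := fun i => s i / b + 1 with hu_def
  set v : ℝ := (1 - ∑ i, s i) / b + 1 with hv_def
  have hu2 : ∀ i, 1 < u i := fun i => hu i
  have hv2 : 1 < v := hv
  have hsum : (∑ i, u i) + v = 1 / b + d + 1 := sum_uv hb
  have hA : (0:ℝ) < (∑ i, u i) + v := by rw [hsum]; positivity
  have hΓv : (0:ℝ) < Gamma v := Real.Gamma_pos_of_pos (by linarith)
  have hΓA : (0:ℝ) < Gamma ((∑ i, u i) + v) := Real.Gamma_pos_of_pos hA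
  have hΓu : (0:ℝ) < ∏ i, Gamma (u i) :=
    Finset.prod_pos fun i _ => Real.Gamma_pos_of_pos (by linarith [hu2 i])
  calc ∫ x in Sd d, x k * x l * kappa s b x
      = ∫ x in Sd d, (Gamma ((∑ i, u i) + v) / (Gamma v * ∏ i, Gamma (u i))) *
          (x k * x l * ((1 - ∑ i, x i) ^ (v - 1) * ∏ i, (x i) ^ (u i - 1))) :=
        MeasureTheory.setIntegral_congr_fun (measurableSet_Sd d)
          fun x _ => by rw [kappa_eq s b x]; ring
    _ = (Gamma ((∑ i, u i) + v) / (Gamma v * ∏ i, Gamma (u i))) *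
          ∫ x in Sd d, x k * x l * ((1 - ∑ i, x i) ^ (v - 1) * ∏ i, (x i) ^ (u i - 1)) :=
        MeasureTheory.integral_const_mul _ _
    _ = u k * u l / ((((∑ i, u i) + v) + 1) * ((∑ i, u i) + v)) := by
        rw [dirichlet_int2 u v hu hv.le k l hkl]
        field_simp
    _ = (s k / b + 1) * (s l / b + 1) / ((1 / b + d + 1) * (1 / b + d + 2)) := by
        rw [hsum]
        simp only [hu_def]; ring

lemma kappa_continuous (hb : 0 < b) (hs : s ∈ SdInt d) : Continuous (kappa s b) := by
  have hu := hu_gt hb hs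
  have hv := hv_gt hb hs
  have : kappa s b = fun x => (Gamma ((∑ i, (s i / b + 1)) + ((1 - ∑ i, s i) / b + 1)) /
        (Gamma ((1 - ∑ i, s i) / b + 1) * ∏ i, Gamma (s i / b + 1))) *
      ((1 - ∑ i, x i) ^ (((1 - ∑ i, s i) / b + 1) - 1) *
        ∏ i, (x i) ^ ((s i / b + 1) - 1)) := funext (kappa_eq s b)
  rw [this]
  exact continuous_const.mul (cont_dirichlet (fun i => (hu i).le) hv.le)

lemma CbM_formula (hb : 0 < b) (hs : s ∈ SdInt d) (k l : Fin d) (hkl : k ≠ l) :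
    CbM b s k l = (s k / b + 1) * (s l / b + 1) / ((1 / b + d + 1) * (1 / b + d + 2))
      - s l * ((s k / b + 1) / (1 / b + d + 1))
      - s k * ((s l / b + 1) / (1 / b + d + 1)) + s k * s l := by
  have hκc := kappa_continuous hb hs
  have i4 : IntegrableOn (kappa s b) (Sd d) volume :=
    hκc.continuousOn.integrableOn_compact (isCompact_Sd d)
  have i2 : IntegrableOn (fun x => x k * kappa s b x) (Sd d) volume :=
    (((continuous_apply k).mul hκc).continuousOn).integrableOn_compact (isCompact_Sd d)
  have i3 : IntegrableOn (fun x => x l * kappa s b x) (Sd d) volume :=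
    (((continuous_apply l).mul hκc).continuousOn).integrableOn_compact (isCompact_Sd d)
  have i1 : IntegrableOn (fun x => x k * x l * kappa s b x) (Sd d) volume :=
    ((((continuous_apply k).mul (continuous_apply l)).mul hκc).continuousOn).integrableOn_compact
      (isCompact_Sd d)
  have expand : CbM b s k l = ∫ x in Sd d,
      (x k * x l * kappa s b x - s l * (x k * kappa s b x) - s k * (x l * kappa s b x)
        + s k * s l * kappa s b x) :=
    MeasureTheory.setIntegral_congr_fun (measurableSet_Sd d) fun x _ => by ring
  have j2 : IntegrableOn (fun x => s l * (x k * kappa s b x)) (Sd d) volume := i2.const_mul _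
  have j3 : IntegrableOn (fun x => s k * (x l * kappa s b x)) (Sd d) volume := i3.const_mul _
  have j4 : IntegrableOn (fun x => s k * s l * kappa s b x) (Sd d) volume := i4.const_mul _
  have j12 : IntegrableOn (fun x => x k * x l * kappa s b x - s l * (x k * kappa s b x))
      (Sd d) volume := i1.sub j2
  have j123 : IntegrableOn (fun x => x k * x l * kappa s b x - s l * (x k * kappa s b x)
      - s k * (x l * kappa s b x)) (Sd d) volume := j12.sub j3
  rw [expand,
    MeasureTheory.integral_add j123 j4,
    MeasureTheory.integral_sub j12 j3,
    MeasureTheory.integral_sub i1 j2,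
    MeasureTheory.integral_const_mul, MeasureTheory.integral_const_mul,
    MeasureTheory.integral_const_mul,
    kappa_M0 hb hs, kappa_M1 hb hs k, kappa_M1 hb hs l, kappa_M2 hb hs k l hkl]
  ring

end Moments2

lemma CbM_div_sq {d : ℕ} {b : ℝ} (hb : 0 < b) {s : Fin d → ℝ} (hs : s ∈ SdInt d)
    (k l : Fin d) (hkl : k ≠ l) :
    CbM b s k l / b ^ 2
      = (1 - s l * ((s k / b) + d + 2) + b * (s k / b) * (d + 2) * (s l * (d + 1) - 1))
          / ((1 + ((d : ℝ) + 1) * b) * (1 + ((d : ℝ) + 2) * b)) := by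
  have h1 : (0:ℝ) < 1 + ((d:ℝ) + 1) * b := by positivity
  have h2 : (0:ℝ) < 1 + ((d:ℝ) + 2) * b := by positivity
  have h3 : (0:ℝ) < 1 / b + (d:ℝ) + 1 := by positivity
  have h4 : (0:ℝ) < 1 / b + (d:ℝ) + 2 := by positivity
  rw [CbM_formula hb hs k l hkl]
  field_simp
  ring

/-- asymptotics of `C_b(s(b);k,ℓ)` when only the `k`-th coordinate
vanishes at rate `b` and the `ℓ`-th coordinate is fixed at `c`. -/
theorem Cb_mixed_boundary (d : ℕ) (hd : 0 < d) (k l : Fin d) (hkl : k ≠ l)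
    (lamk : ℝ) (hk : 0 < lamk) (c : ℝ)
    (s : ℝ → Fin d → ℝ) (hsInt : ∀ b : ℝ, 0 < b → s b ∈ SdInt d)
    (hks : Tendsto (fun b : ℝ => s b k / b) (nhdsWithin 0 (Set.Ioi 0)) (nhds lamk))
    (hls : ∀ b : ℝ, s b l = c) :
    Tendsto (fun b : ℝ => CbM b (s b) k l / b ^ 2) (nhdsWithin 0 (Set.Ioi 0))
      (nhds (1 - c * (lamk + d + 2))) ∧
    ((∀ b : ℝ, 0 < b → s b k = lamk * b) →
      ∃ C > (0 : ℝ), ∃ b₀ > (0 : ℝ), ∀ b ∈ Set.Ioo (0 : ℝ) b₀,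
        |CbM b (s b) k l - b ^ 2 * (1 - c * (lamk + d + 2))| ≤ C * b ^ 3) := by
  have hG : ∀ b : ℝ, 0 < b → CbM b (s b) k l / b ^ 2
      = (1 - c * ((s b k / b) + d + 2) + b * (s b k / b) * (d + 2) * (c * (d + 1) - 1))
          / ((1 + ((d : ℝ) + 1) * b) * (1 + ((d : ℝ) + 2) * b)) := by
    intro b hb
    rw [CbM_div_sq hb (hsInt b hb) k l hkl, hls b]
  have htb : Tendsto (fun b : ℝ => b) (nhdsWithin 0 (Set.Ioi 0)) (nhds 0) :=
    tendsto_id.mono_left nhdsWithin_le_nhds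
  constructor
  · have hnum : Tendsto (fun b : ℝ =>
        1 - c * ((s b k / b) + d + 2) + b * (s b k / b) * (d + 2) * (c * (d + 1) - 1))
        (nhdsWithin 0 (Set.Ioi 0))
        (nhds (1 - c * (lamk + d + 2) + 0 * lamk * ((d:ℝ) + 2) * (c * ((d:ℝ) + 1) - 1))) := by
      refine Tendsto.add ?_ ?_
      · exact tendsto_const_nhds.sub
          (tendsto_const_nhds.mul ((hks.add tendsto_const_nhds).add tendsto_const_nhds))
      · exact ((htb.mul hks).mul tendsto_const_nhds).mul tendsto_const_nhds
    have hden : Tendsto (fun b : ℝ => (1 + ((d : ℝ) + 1) * b) * (1 + ((d : ℝ) + 2) * b))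
        (nhdsWithin 0 (Set.Ioi 0))
        (nhds ((1 + ((d:ℝ) + 1) * 0) * (1 + ((d:ℝ) + 2) * 0))) :=
      (tendsto_const_nhds.add (tendsto_const_nhds.mul htb)).mul
        (tendsto_const_nhds.add (tendsto_const_nhds.mul htb))
    have hlim := hnum.div hden (by norm_num)
    rw [show (1 - c * (lamk + d + 2) + 0 * lamk * ((d:ℝ) + 2) * (c * ((d:ℝ) + 1) - 1))
        / ((1 + ((d:ℝ) + 1) * 0) * (1 + ((d:ℝ) + 2) * 0)) = 1 - c * (lamk + d + 2) by ring]
      at hlim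
    refine Tendsto.congr' ?_ hlim
    filter_upwards [self_mem_nhdsWithin] with b hb
    exact (hG b hb).symm
  · intro hexact
    set L : ℝ := 1 - c * (lamk + d + 2) with hL
    set A : ℝ := |lamk * ((d:ℝ) + 2) * (c * ((d:ℝ) + 1) - 1) - (2 * (d:ℝ) + 3) * L| with hA
    set B : ℝ := ((d:ℝ) + 1) * ((d:ℝ) + 2) * |L| with hB
    refine ⟨A + B + 1, by positivity, 1, one_pos, fun b hb => ?_⟩
    obtain ⟨hb0, hb1⟩ := hb
    have ht : s b k / b = lamk := by
      rw [hexact b hb0]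
      field_simp
    have hGb := hG b hb0
    rw [ht] at hGb
    have h1 : (0:ℝ) < 1 + ((d:ℝ) + 1) * b := by positivity
    have h2 : (0:ℝ) < 1 + ((d:ℝ) + 2) * b := by positivity
    have hd1 : (0:ℝ) ≤ ((d:ℝ) + 1) * b := by positivity
    have hd2 : (0:ℝ) ≤ ((d:ℝ) + 2) * b := by positivity
    have hQ1 : (1:ℝ) ≤ (1 + ((d:ℝ) + 1) * b) * (1 + ((d:ℝ) + 2) * b) := by
      nlinarith [mul_nonneg hd1 hd2]
    have hCbM : CbM b (s b) k l =
        b ^ 2 * ((1 - c * (lamk + d + 2) + b * lamk * (d + 2) * (c * (d + 1) - 1))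
          / ((1 + ((d : ℝ) + 1) * b) * (1 + ((d : ℝ) + 2) * b))) := by
      have h := (div_eq_iff (pow_ne_zero 2 hb0.ne')).1 hGb
      rw [h]
      ring
    have hGL : (1 - c * (lamk + d + 2) + b * lamk * (d + 2) * (c * (d + 1) - 1))
          / ((1 + ((d : ℝ) + 1) * b) * (1 + ((d : ℝ) + 2) * b)) - L
        = b * (lamk * ((d:ℝ) + 2) * (c * ((d:ℝ) + 1) - 1) - (2 * (d:ℝ) + 3) * L
            - ((d:ℝ) + 1) * ((d:ℝ) + 2) * L * b)
          / ((1 + ((d : ℝ) + 1) * b) * (1 + ((d : ℝ) + 2) * b)) := by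
      rw [hL]
      field_simp
      ring
    have hP : |lamk * ((d:ℝ) + 2) * (c * ((d:ℝ) + 1) - 1) - (2 * (d:ℝ) + 3) * L
        - ((d:ℝ) + 1) * ((d:ℝ) + 2) * L * b| ≤ A + B := by
      have htri : |lamk * ((d:ℝ) + 2) * (c * ((d:ℝ) + 1) - 1) - (2 * (d:ℝ) + 3) * L
          - ((d:ℝ) + 1) * ((d:ℝ) + 2) * L * b|
          ≤ A + |((d:ℝ) + 1) * ((d:ℝ) + 2) * L * b| := by
        rw [hA, sub_eq_add_neg]
        exact (abs_add_le _ _).trans (by rw [abs_neg])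
      have hb' : |((d:ℝ) + 1) * ((d:ℝ) + 2) * L * b| ≤ B := by
        rw [abs_mul, abs_of_pos hb0, abs_mul, abs_mul,
          abs_of_pos (by positivity : (0:ℝ) < (d:ℝ) + 1),
          abs_of_pos (by positivity : (0:ℝ) < (d:ℝ) + 2), hB]
        have hX : (0:ℝ) ≤ ((d:ℝ) + 1) * ((d:ℝ) + 2) * |L| := by positivity
        nlinarith [hX]
      linarith
    have hGLabs : |(1 - c * (lamk + d + 2) + b * lamk * (d + 2) * (c * (d + 1) - 1))
          / ((1 + ((d : ℝ) + 1) * b) * (1 + ((d : ℝ) + 2) * b)) - L| ≤ b * (A + B) := by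
      rw [hGL, abs_div, abs_mul, abs_of_pos hb0, abs_of_pos (mul_pos h1 h2)]
      calc b * |lamk * ((d:ℝ) + 2) * (c * ((d:ℝ) + 1) - 1) - (2 * (d:ℝ) + 3) * L
            - ((d:ℝ) + 1) * ((d:ℝ) + 2) * L * b|
            / ((1 + ((d:ℝ) + 1) * b) * (1 + ((d:ℝ) + 2) * b))
          ≤ b * |lamk * ((d:ℝ) + 2) * (c * ((d:ℝ) + 1) - 1) - (2 * (d:ℝ) + 3) * L
            - ((d:ℝ) + 1) * ((d:ℝ) + 2) * L * b| / 1 := by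
            exact div_le_div_of_nonneg_left (mul_nonneg hb0.le (abs_nonneg _)) one_pos hQ1
        _ ≤ b * (A + B) := by
            rw [div_one]
            exact mul_le_mul_of_nonneg_left hP hb0.le
    calc |CbM b (s b) k l - b ^ 2 * L|
        = b ^ 2 * |(1 - c * (lamk + d + 2) + b * lamk * (d + 2) * (c * (d + 1) - 1))
            / ((1 + ((d : ℝ) + 1) * b) * (1 + ((d : ℝ) + 2) * b)) - L| := by
          rw [hCbM, ← mul_sub, abs_mul, abs_of_nonneg (by positivity : (0:ℝ) ≤ b ^ 2)]
      _ ≤ b ^ 2 * (b * (A + B)) := mul_le_mul_of_nonneg_left hGLabs (by positivity)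
      _ ≤ (A + B + 1) * b ^ 3 := by nlinarith [pow_pos hb0 3]
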